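/- Let f ∈ ℤ[X] and let p be a prime number not dividing the leading coefficient of f. Suppose the reduction f̄ of f modulo p factors as f̄ = ∏_{i=1}^{m} g_i with each g_i irreducible in F_p[X]. If a ∈ ℤ[X] divides f, then the degree of a equals Σ_{i∈S} deg(g_i) for some subset S of {1, …, m}. -/

import Mathlib

open Polynomial

lemma aux_dvd_prod_irred {R : Type*} [CommRing R] [IsDomain R] [IsPrincipalIdealRing R]
    {ι : Type*} (s : Finset ι) (g : ι → R) (hg : ∀ i ∈ s, Irreducible (g i)) :
    ∀ a : R, a ∣ ∏ i ∈ s, g i → ∃ t ⊆ s, Associated a (∏ i ∈ t, g i) := by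
  classical
  induction s using Finset.cons_induction with
  | empty =>
    intro a ha
    simp only [Finset.prod_empty] at ha
    exact ⟨∅, by simp, by simpa [associated_one_iff_isUnit] using isUnit_of_dvd_one ha⟩
  | cons j s hj ih =>
    intro a ha
    rw [Finset.prod_cons] at ha
    by_cases hdvd : g j ∣ a
    · obtain ⟨a', rfl⟩ := hdvd
      have hgj := hg j (Finset.mem_cons_self j s)
      have ha' : a' ∣ ∏ i ∈ s, g i := (mul_dvd_mul_iff_left hgj.ne_zero).mp ha
      obtain ⟨t, hts, hat⟩ := ih (fun i hi => hg i (Finset.mem_cons_of_mem hi)) a' ha'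
      refine ⟨Finset.cons j t (fun h => hj (hts h)), ?_, ?_⟩
      · intro x hx
        rcases Finset.mem_cons.mp hx with rfl | hx
        · exact Finset.mem_cons_self _ _
        · exact Finset.mem_cons_of_mem (hts hx)
      · rw [Finset.prod_cons]
        exact Associated.mul_left (g j) hat
    · have hcop : IsCoprime (g j) a :=
        (hg j (Finset.mem_cons_self j s)).coprime_iff_not_dvd.mpr hdvd
      have ha2 : a ∣ ∏ i ∈ s, g i := hcop.symm.dvd_of_dvd_mul_left ha
      obtain ⟨t, hts, hat⟩ := ih (fun i hi => hg i (Finset.mem_cons_of_mem hi)) a ha2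
      exact ⟨t, fun x hx => Finset.mem_cons_of_mem (hts hx), hat⟩

/-- If `p` is a prime not dividing the leading coefficient of `f : ℤ[X]` and the
reduction of `f` mod `p` factors as a product of irreducibles `g 1, …, g m` over `F_p`,
then the degree of any divisor `a` of `f` in `ℤ[X]` is a subset sum of the degrees of
the `g i`. -/
theorem natDegree_dvd_eq_subset_sum (f : Polynomial ℤ) (p : ℕ) (hp : p.Prime)
    (hlc : ¬ ((p : ℤ) ∣ f.leadingCoeff))
    (m : ℕ) (g : Fin m → Polynomial (ZMod p))
    (hirr : ∀ i, Irreducible (g i))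
    (hfac : f.map (Int.castRingHom (ZMod p)) = ∏ i, g i)
    (a : Polynomial ℤ) (ha : a ∣ f) :
    ∃ S : Finset (Fin m), a.natDegree = ∑ i ∈ S, (g i).natDegree := by
  haveI : Fact p.Prime := ⟨hp⟩
  obtain ⟨b, rfl⟩ := ha
  have hla : ¬ ((p : ℤ) ∣ a.leadingCoeff) := by
    rw [leadingCoeff_mul] at hlc
    exact fun h => hlc (h.mul_right _)
  -- leading coeff of a maps to nonzero
  have hlc0 : (Int.castRingHom (ZMod p)) a.leadingCoeff ≠ 0 := by
    simpa [ZMod.intCast_zmod_eq_zero_iff_dvd] using hla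
  have hdeg : (a.map (Int.castRingHom (ZMod p))).natDegree = a.natDegree :=
    natDegree_map_of_leadingCoeff_ne_zero _ hlc0
  have hdvd : a.map (Int.castRingHom (ZMod p)) ∣ ∏ i, g i := by
    rw [← hfac, Polynomial.map_mul]
    exact Dvd.intro _ rfl
  obtain ⟨t, _, hat⟩ := aux_dvd_prod_irred Finset.univ g (fun i _ => hirr i) _ hdvd
  refine ⟨t, ?_⟩
  obtain ⟨u, hu⟩ := hat
  have ha0 : a.map (Int.castRingHom (ZMod p)) ≠ 0 := fun h => hlc0 (by
    have := Polynomial.leadingCoeff_map_of_leadingCoeff_ne_zero _ hlc0 (p := a)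
    rw [h] at this; simpa using this.symm)
  have hu0 : (u : Polynomial (ZMod p)) ≠ 0 := u.isUnit.ne_zero
  have := congrArg Polynomial.natDegree hu
  rw [Polynomial.natDegree_mul ha0 hu0, Polynomial.natDegree_eq_zero_of_isUnit u.isUnit,
    add_zero, hdeg, Polynomial.natDegree_prod] at this
  · exact this
  · exact fun i _ => (hirr i).ne_zero
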